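/- Let M > 0 and k > 0 be real parameters. For every h ≥ 0, one has G_{M,k}(h) ≤ Γ_{M,k}(h)² ≤ 4·G_{M,k}(h). -/
import Mathlib


/-- The truncated power `g_{M,k}` used in the Moser iteration. Real powers. -/
noncomputable def gMk (M k h : ℝ) : ℝ :=
  if h ≤ M then h ^ (2 * k + 1) / (2 * k + 1)
  else M ^ (2 * k + 1) / (2 * k + 1) + M ^ (2 * k) * (h - M)

/-- The antiderivative `G_{M,k}` of `g_{M,k}`. Real powers. -/
noncomputable def GMk (M k h : ℝ) : ℝ :=
  if h ≤ M then h ^ (2 * k + 2) / ((2 * k + 2) * (2 * k + 1))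
  else M ^ (2 * k + 2) / ((2 * k + 2) * (2 * k + 1))
    + M ^ (2 * k + 1) * (h - M) / (2 * k + 1) + M ^ (2 * k) * (h - M) ^ 2 / 2

/-- The antiderivative `Γ_{M,k}` of `√(g_{M,k}')`. Real powers. -/
noncomputable def GammaMk (M k h : ℝ) : ℝ :=
  if h ≤ M then h ^ (k + 1) / (k + 1)
  else M ^ (k + 1) / (k + 1) + M ^ k * (h - M)

/-- For `M > 0`, `k > 0` and every `h >= 0`:
`G_{M,k}(h) <= Γ_{M,k}(h)^2 <= 4 G_{M,k}(h)`. -/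
lemma stmt_9_aux (k a b t : ℝ) (hk : 0 < k) (ha : 0 < a) (hb : 0 < b) (ht : 0 < t) :
    a * a / ((2 * k + 2) * (2 * k + 1)) + a * b * t / (2 * k + 1) + b * b * t ^ 2 / 2
      ≤ (a / (k + 1) + b * t) ^ 2 ∧
    (a / (k + 1) + b * t) ^ 2
      ≤ 4 * (a * a / ((2 * k + 2) * (2 * k + 1)) + a * b * t / (2 * k + 1) + b * b * t ^ 2 / 2) := by
  have hk1 : (0:ℝ) < k + 1 := by linarith
  have h2k1 : (0:ℝ) < 2 * k + 1 := by linarith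
  have h2k2 : (0:ℝ) < 2 * k + 2 := by linarith
  have expand : (a / (k + 1) + b * t) ^ 2
      = a * a / (k + 1) ^ 2 + 2 * (a * b * t) / (k + 1) + b * b * t ^ 2 := by
    field_simp; ring
  have habt : 0 < a * b * t := by positivity
  have haa : 0 < a * a := by positivity
  have f1 : a * a / ((2 * k + 2) * (2 * k + 1)) ≤ a * a / (k + 1) ^ 2 := by
    rw [div_le_div_iff₀ (by positivity) (by positivity)]
    nlinarith [mul_nonneg haa.le (mul_nonneg hk.le hk.le), mul_nonneg haa.le hk.le]
  have f1' : a * a / (k + 1) ^ 2 ≤ 4 * (a * a / ((2 * k + 2) * (2 * k + 1))) := by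
    rw [← mul_div_assoc, div_le_div_iff₀ (by positivity) (by positivity)]
    nlinarith [mul_nonneg haa.le hk.le]
  have f2 : a * b * t / (2 * k + 1) ≤ 2 * (a * b * t) / (k + 1) := by
    rw [div_le_div_iff₀ (by positivity) (by positivity)]
    nlinarith [habt, mul_pos habt hk]
  have f2' : 2 * (a * b * t) / (k + 1) ≤ 4 * (a * b * t / (2 * k + 1)) := by
    rw [← mul_div_assoc, div_le_div_iff₀ (by positivity) (by positivity)]
    nlinarith [habt, mul_pos habt hk]
  have hbbt : 0 < b * b * t ^ 2 := by positivity
  constructor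
  · rw [expand]; linarith
  · rw [expand]; linarith

theorem stmt_9 (M k : ℝ) (hM : 0 < M) (hk : 0 < k) (h : ℝ) (hh : 0 ≤ h) :
    GMk M k h ≤ (GammaMk M k h) ^ 2 ∧ (GammaMk M k h) ^ 2 ≤ 4 * GMk M k h := by
  unfold GMk GammaMk
  have hk1 : (0:ℝ) < k + 1 := by linarith
  have h2k1 : (0:ℝ) < 2 * k + 1 := by linarith
  have h2k2 : (0:ℝ) < 2 * k + 2 := by linarith
  by_cases hle : h ≤ M
  · simp only [hle, if_pos]
    have hX : h ^ (2 * k + 2) = (h ^ (k + 1)) ^ 2 := by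
      rw [← Real.rpow_natCast (h ^ (k + 1)) 2, ← Real.rpow_mul hh]
      norm_num; ring_nf
    have hXnn : (0:ℝ) ≤ h ^ (2 * k + 2) := Real.rpow_nonneg hh _
    rw [div_pow, ← hX]
    constructor
    · rw [div_le_div_iff₀ (by positivity) (by positivity)]
      nlinarith [mul_nonneg hXnn (mul_nonneg hk.le hk.le), mul_nonneg hXnn hk.le]
    · rw [← mul_div_assoc, div_le_div_iff₀ (by positivity) (by positivity)]
      nlinarith [mul_nonneg hXnn hk.le]
  · simp only [hle, if_neg, not_false_iff]
    have ht : 0 < h - M := by linarith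
    have ha : 0 < M ^ (k + 1) := Real.rpow_pos_of_pos hM _
    have hb : 0 < M ^ k := Real.rpow_pos_of_pos hM _
    have e1 : M ^ (2 * k + 1) = M ^ (k + 1) * M ^ k := by
      rw [← Real.rpow_add hM]; ring_nf
    have e2 : M ^ (2 * k + 2) = M ^ (k + 1) * M ^ (k + 1) := by
      rw [← Real.rpow_add hM]; ring_nf
    have e3 : M ^ (2 * k) = M ^ k * M ^ k := by
      rw [← Real.rpow_add hM]; ring_nf
    rw [e1, e2, e3]
    exact stmt_9_aux k (M ^ (k + 1)) (M ^ k) (h - M) hk ha hb ht
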